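/- Let C be a metric cycle of total length L, let α ∈ [0, 1/4], and let p, q ∈ C with d_C(p,q) = α·L. Then for every pair of points x, y ∈ C: |d_C(x,p) − d_C(y,p)| + |d_C(x,q) − d_C(y,q)| ≥ 4α · d_C(x,y). -/

import Mathlib

/-- The intrinsic metric on the cycle `ℝ/Lℤ` of total length `L`, in terms of
representatives in `ℝ`: `d_C(x,y) = min(m, L − m)` where `m = (x−y) mod L`. -/
noncomputable def cycDist (L x y : ℝ) : ℝ :=
  min ((x - y) - L * (⌊(x - y) / L⌋ : ℤ)) (L - ((x - y) - L * (⌊(x - y) / L⌋ : ℤ)))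

/-- Distance to the nearest integer. -/
noncomputable def Tent (x : ℝ) : ℝ := min (Int.fract x) (1 - Int.fract x)

lemma Tent_sub_int (x : ℝ) (n : ℤ) : Tent (x - n) = Tent x := by
  simp [Tent, Int.fract_sub_intCast]

lemma Tent_fract (x : ℝ) : Tent (Int.fract x) = Tent x := by
  rw [Int.fract]; exact Tent_sub_int x ⌊x⌋

lemma Tent_neg (x : ℝ) : Tent (-x) = Tent x := by
  by_cases h : Int.fract x = 0
  · have h' : Int.fract (-x) = 0 := Int.fract_neg_eq_zero.2 h
    simp [Tent, h, h']
  · rw [Tent, Int.fract_neg h, Tent]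
    rw [show (1 : ℝ) - (1 - Int.fract x) = Int.fract x by ring, min_comm]

lemma Tent_of_Ico {x : ℝ} (h0 : 0 ≤ x) (h1 : x < 1) : Tent x = min x (1 - x) := by
  rw [Tent, Int.fract_eq_self.2 ⟨h0, h1⟩]

lemma Tent_sub {a b : ℝ} (ha0 : 0 ≤ a) (ha1 : a < 1) (hb0 : 0 ≤ b) (hb1 : b < 1) :
    Tent (a - b) = min |a - b| (1 - |a - b|) := by
  rcases le_total b a with h | h
  · rw [abs_of_nonneg (by linarith), Tent_of_Ico (by linarith) (by linarith)]
  · rw [abs_of_nonpos (by linarith), ← Tent_neg, neg_sub,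
      Tent_of_Ico (by linarith) (by linarith)]

lemma cycDist_smul {L : ℝ} (hL : 0 < L) (x y : ℝ) :
    cycDist L x y = L * Tent ((x - y) / L) := by
  have hne : L ≠ 0 := hL.ne'
  have h1 : (x - y) - L * (⌊(x - y) / L⌋ : ℤ) = L * Int.fract ((x - y) / L) := by
    rw [Int.fract]; field_simp
  have h2 : L - L * Int.fract ((x - y) / L) = L * (1 - Int.fract ((x - y) / L)) := by
    ring
  rw [cycDist, h1, h2, Tent, mul_min_of_nonneg _ _ hL.le]

set_option maxHeartbeats 4000000 in
/-- Core inequality on the unit circle, with representatives in `[0,1)`. -/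
lemma core (U V B : ℝ) (hU0 : 0 ≤ U) (hU1 : U < 1) (hV0 : 0 ≤ V) (hV1 : V < 1)
    (hB0 : 0 ≤ B) (hB1 : B < 1) (hUV : V ≤ U) (hα : min B (1 - B) ≤ 1 / 4) :
    4 * min B (1 - B) * Tent (U - V) ≤
      |Tent U - Tent V| + |Tent (U - B) - Tent (V - B)| := by
  rw [Tent_of_Ico hU0 hU1, Tent_of_Ico hV0 hV1, Tent_sub hU0 hU1 hV0 hV1,
    Tent_sub hU0 hU1 hB0 hB1, Tent_sub hV0 hV1 hB0 hB1,
    abs_of_nonneg (by linarith : (0:ℝ) ≤ U - V)]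
  have A1 := le_abs_self (min U (1 - U) - min V (1 - V))
  have A2 := neg_abs_le (min U (1 - U) - min V (1 - V))
  have A3 := le_abs_self (min |U - B| (1 - |U - B|) - min |V - B| (1 - |V - B|))
  have A4 := neg_abs_le (min |U - B| (1 - |U - B|) - min |V - B| (1 - |V - B|))
  have P1 : 0 ≤ (1 - 4 * min B (1 - B)) * min (U - V) (1 - (U - V)) :=
    mul_nonneg (by linarith) (le_min (by linarith) (by linarith))
  have P2 : 0 ≤ min B (1 - B) * (1 - 2 * min (U - V) (1 - (U - V))) := by
    have h1 := min_le_left (U - V) (1 - (U - V))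
    have h2 := min_le_right (U - V) (1 - (U - V))
    exact mul_nonneg (le_min hB0 (by linarith)) (by linarith)
  rcases min_cases B (1 - B) with ⟨hm0, hc0⟩ | ⟨hm0, hc0⟩ <;>
  rcases min_cases (U - V) (1 - (U - V)) with ⟨hm1, hc1⟩ | ⟨hm1, hc1⟩ <;>
  rcases min_cases U (1 - U) with ⟨hm2, hc2⟩ | ⟨hm2, hc2⟩ <;>
  rcases min_cases V (1 - V) with ⟨hm3, hc3⟩ | ⟨hm3, hc3⟩ <;>
  rcases abs_cases (U - B) with ⟨hm4, hc4⟩ | ⟨hm4, hc4⟩ <;>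
  rcases abs_cases (V - B) with ⟨hm5, hc5⟩ | ⟨hm5, hc5⟩ <;>
  rcases min_cases |U - B| (1 - |U - B|) with ⟨hm6, hc6⟩ | ⟨hm6, hc6⟩ <;>
  rcases min_cases |V - B| (1 - |V - B|) with ⟨hm7, hc7⟩ | ⟨hm7, hc7⟩ <;>
  simp only [hm4, hm5] at hm6 hm7 hc6 hc7 <;>
  simp only [hm0, hm1, hm2, hm3, hm4, hm5, hm6, hm7] at A1 A2 A3 A4 P1 P2 ⊢ <;>
  first
    | linarith [A1, A3]
    | linarith [A1, A4]
    | linarith [A2, A3]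
    | linarith [A2, A4]
    | nlinarith [A1, A2, A3, A4, P1, P2]

lemma core' (U V B : ℝ) (hU0 : 0 ≤ U) (hU1 : U < 1) (hV0 : 0 ≤ V) (hV1 : V < 1)
    (hB0 : 0 ≤ B) (hB1 : B < 1) (hα : min B (1 - B) ≤ 1 / 4) :
    4 * min B (1 - B) * Tent (U - V) ≤
      |Tent U - Tent V| + |Tent (U - B) - Tent (V - B)| := by
  rcases le_total V U with h | h
  · exact core U V B hU0 hU1 hV0 hV1 hB0 hB1 h hα
  · have := core V U B hV0 hV1 hU0 hU1 hB0 hB1 h hα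
    rw [abs_sub_comm (Tent V) (Tent U), abs_sub_comm (Tent (V - B)) (Tent (U - B)),
      show V - U = -(U - V) by ring, Tent_neg] at this
    exact this

lemma Tent_sub_eq_fract (u b : ℝ) :
    Tent (u - b) = Tent (Int.fract u - Int.fract b) := by
  have : Int.fract u - Int.fract b = (u - b) - (⌊u⌋ - ⌊b⌋ : ℤ) := by
    rw [Int.fract, Int.fract]; push_cast; ring
  rw [this, Tent_sub_int]

/-- Flattening lemma: if `p, q` are at cycle distance `α·L` with `α ∈ [0,1/4]`, then for
any `x, y` the sum of the two flattened distances is at least `4α·d_C(x,y)`. -/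
theorem flatten_two_anchor_bound (L : ℝ) (hL : 0 < L) (α : ℝ)
    (hα0 : 0 ≤ α) (hα4 : α ≤ 1 / 4) (p q x y : ℝ)
    (hpq : cycDist L p q = α * L) :
    4 * α * cycDist L x y ≤
      |cycDist L x p - cycDist L y p| + |cycDist L x q - cycDist L y q| := by
  have hne : L ≠ 0 := hL.ne'
  set u := (x - p) / L with hu
  set v := (y - p) / L with hv
  set b := (q - p) / L with hb
  have hxy : (x - y) / L = u - v := by rw [hu, hv]; ring
  have hxq : (x - q) / L = u - b := by rw [hu, hb]; ring
  have hyq : (y - q) / L = v - b := by rw [hv, hb]; ring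
  have hpq' : (p - q) / L = -b := by rw [hb]; ring
  have hα : α = Tent b := by
    have h1 := cycDist_smul hL p q
    rw [hpq, hpq', Tent_neg] at h1
    exact mul_left_cancel₀ hne (by linarith)
  rw [cycDist_smul hL x y, cycDist_smul hL x p, cycDist_smul hL y p,
    cycDist_smul hL x q, cycDist_smul hL y q, hxy, hxq, hyq]
  rw [← mul_sub, ← mul_sub, abs_mul, abs_mul, abs_of_pos hL]
  set U := Int.fract u with hU
  set V := Int.fract v with hV
  set B := Int.fract b with hB
  have key := core' U V B (Int.fract_nonneg u) (Int.fract_lt_one u)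
    (Int.fract_nonneg v) (Int.fract_lt_one v) (Int.fract_nonneg b) (Int.fract_lt_one b)
    (by
      have : min B (1 - B) = Tent B := by
        rw [Tent, hB, Int.fract_fract]
      rw [this, hB, Tent_fract, ← hα]; exact hα4)
  have hminB : min B (1 - B) = α := by
    have : min B (1 - B) = Tent B := by rw [Tent, hB, Int.fract_fract]
    rw [this, hB, Tent_fract, ← hα]
  have e1 : Tent (U - V) = Tent (u - v) := (Tent_sub_eq_fract u v).symm
  have e2 : Tent U = Tent u := by rw [hU, Tent_fract]
  have e3 : Tent V = Tent v := by rw [hV, Tent_fract]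
  have e4 : Tent (U - B) = Tent (u - b) := (Tent_sub_eq_fract u b).symm
  have e5 : Tent (V - B) = Tent (v - b) := (Tent_sub_eq_fract v b).symm
  rw [hminB, e1, e2, e3, e4, e5] at key
  calc 4 * α * (L * Tent (u - v)) = L * (4 * α * Tent (u - v)) := by ring
    _ ≤ L * (|Tent u - Tent v| + |Tent (u - b) - Tent (v - b)|) :=
        mul_le_mul_of_nonneg_left key hL.le
    _ = L * |Tent u - Tent v| + L * |Tent (u - b) - Tent (v - b)| := by ring
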